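/- Let ν : ℝ³ → ℝ be a measurable function satisfying ν₀(1+|v|) ≤ ν(v) ≤ ν₁(1+|v|) for constants ν₀, ν₁ > 0, and let M(v) = (2π)^{−3/2} e^{−|v|²/2}. For j ∈ {−1, 1}, ε ∈ (0,1) and s > 0, define S(ε, s, j) = (ε/2) ∫_{ℝ³} [ε s (v₁ + j) v₂² M(v)] / [ν(v)² + ε²s²(v₁ + j)²] dv. Then there exists a constant C₃ > 0, depending only on ν₀ and ν₁, such that whenever εs ≥ 2: |S(ε, s, j)| ≤ C₃ · ln(εs) / s. -/

import Mathlib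

noncomputable section

open MeasureTheory

/-- The normalized global Maxwellian `M(v) = (2π)^{−3/2} e^{−|v|²/2}` on `ℝ³`. -/
def Mx (v : EuclideanSpace ℝ (Fin 3)) : ℝ :=
  (2 * Real.pi) ^ (-(3:ℝ)/2) * Real.exp (-‖v‖^2 / 2)

/-- The quantity `S(ε, s, j) = (ε/2) ∫ εs(v₁+j) v₂² M / (ν² + ε²s²(v₁+j)²) dv`. -/
def Squant (ν : EuclideanSpace ℝ (Fin 3) → ℝ) (ε s j : ℝ) : ℝ :=
  (ε/2) * ∫ v : EuclideanSpace ℝ (Fin 3),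
    (ε * s * (v 0 + j) * (v 1)^2 * Mx v) / ((ν v)^2 + ε^2 * s^2 * (v 0 + j)^2)

open Real

/-- integrability of the 1D kernel -/
lemma oneDim_integrable {b : ℝ} (hb : 0 < b) :
    Integrable (fun x : ℝ => ((1 + b * |x|) * (1 + x ^ 2))⁻¹) := by
  have hpos : ∀ x : ℝ, (0:ℝ) < (1 + b * |x|) * (1 + x ^ 2) := by
    intro x; positivity
  have hcont : Continuous (fun x : ℝ => ((1 + b * |x|) * (1 + x ^ 2))⁻¹) := by
    apply Continuous.inv₀
    · exact (continuous_const.add (continuous_const.mul continuous_abs)).mul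
        (continuous_const.add (continuous_pow 2))
    · exact fun x => (hpos x).ne'
  refine integrable_inv_one_add_sq.mono' hcont.aestronglyMeasurable ?_
  refine Filter.Eventually.of_forall fun x => ?_
  rw [Real.norm_eq_abs, abs_of_pos (by positivity)]
  rw [mul_inv]
  have h1 : (1 + b * |x|)⁻¹ ≤ 1 := by
    rw [inv_le_one_iff₀]; right; nlinarith [abs_nonneg x]
  have h2 : (0:ℝ) < (1 + x ^ 2)⁻¹ := by positivity
  nlinarith

/-- 1D logarithmic integral bound -/
lemma oneDim_bound {b : ℝ} (hb : 0 < b) :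
    ∫ x : ℝ, ((1 + b * |x|) * (1 + x ^ 2))⁻¹ ≤ (2 * Real.log (1 + b) + π) / b := by
  set g : ℝ → ℝ := fun x => (1 + b * |x|)⁻¹ with hg
  have hgcont : Continuous g := by
    apply Continuous.inv₀
    · exact continuous_const.add (continuous_const.mul continuous_abs)
    · intro x; nlinarith [abs_nonneg x]
  set h₁ : ℝ → ℝ := (Set.Icc (-1:ℝ) 1).indicator g with hh₁
  set h₂ : ℝ → ℝ := fun x => b⁻¹ * (1 + x ^ 2)⁻¹ with hh₂
  have h₁int : Integrable h₁ := by
    rw [hh₁, integrable_indicator_iff measurableSet_Icc]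
    exact hgcont.integrableOn_Icc
  have h₂int : Integrable h₂ := integrable_inv_one_add_sq.const_mul _
  have hfle : ∀ x : ℝ, ((1 + b * |x|) * (1 + x ^ 2))⁻¹ ≤ h₁ x + h₂ x := by
    intro x
    rcases le_or_gt (|x|) 1 with hx | hx
    · have hmem : x ∈ Set.Icc (-1:ℝ) 1 := by
        constructor <;> [linarith [neg_abs_le x]; linarith [le_abs_self x]]
      have heq : h₁ x = g x := Set.indicator_of_mem hmem g
      rw [heq]
      have h2pos : (0:ℝ) ≤ h₂ x := by positivity
      have : ((1 + b * |x|) * (1 + x ^ 2))⁻¹ ≤ g x := by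
        rw [mul_inv]
        have hA : (0:ℝ) < (1 + b * |x|)⁻¹ := by positivity
        have hB : (1 + x ^ 2)⁻¹ ≤ 1 := by
          rw [inv_le_one_iff₀]; right; nlinarith
        nlinarith
      linarith
    · have h1nonneg : (0:ℝ) ≤ h₁ x := Set.indicator_nonneg (fun y _ => by positivity) x
      have : ((1 + b * |x|) * (1 + x ^ 2))⁻¹ ≤ h₂ x := by
        rw [mul_inv, hh₂]
        have hB : (0:ℝ) < (1 + x ^ 2)⁻¹ := by positivity
        have hA : (1 + b * |x|)⁻¹ ≤ b⁻¹ := by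
          apply inv_anti₀ hb
          nlinarith
        nlinarith
      linarith
  have hmono : ∫ x : ℝ, ((1 + b * |x|) * (1 + x ^ 2))⁻¹ ≤ ∫ x, (h₁ x + h₂ x) :=
    integral_mono (oneDim_integrable hb) (h₁int.add h₂int) hfle
  rw [integral_add h₁int h₂int] at hmono
  have e₂ : ∫ x, h₂ x = b⁻¹ * π := by
    rw [hh₂, MeasureTheory.integral_const_mul, integral_univ_inv_one_add_sq]
  have e₁ : ∫ x, h₁ x = 2 * (Real.log (1 + b) / b) := by
    rw [hh₁, integral_indicator measurableSet_Icc, integral_Icc_eq_integral_Ioc,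
      ← intervalIntegral.integral_of_le (by norm_num : (-1:ℝ) ≤ 1)]
    have hii : ∀ u w : ℝ, IntervalIntegrable g volume u w :=
      fun u w => hgcont.intervalIntegrable u w
    rw [← intervalIntegral.integral_add_adjacent_intervals (hii (-1) 0) (hii 0 1)]
    have hneg : ∫ x in (-1:ℝ)..0, g x = ∫ x in (0:ℝ)..1, g x := by
      have h0 : ∫ x in (0:ℝ)..1, g (-x) = ∫ x in (-1:ℝ)..(0:ℝ), g x := by
        simpa using intervalIntegral.integral_comp_neg g (a := 0) (b := 1)
      rw [← h0]
      apply intervalIntegral.integral_congr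
      intro x _
      simp [hg, abs_neg]
    have hval : ∫ x in (0:ℝ)..1, g x = Real.log (1 + b) / b := by
      have hcongr : ∫ x in (0:ℝ)..1, g x = ∫ x in (0:ℝ)..1, (fun y : ℝ => y⁻¹) (b * x + 1) := by
        apply intervalIntegral.integral_congr
        intro x hx
        rw [Set.uIcc_of_le (by norm_num : (0:ℝ) ≤ 1)] at hx
        have : |x| = x := abs_of_nonneg hx.1
        simp [hg, this, add_comm]
      rw [hcongr, intervalIntegral.integral_comp_mul_add (fun y : ℝ => y⁻¹) hb.ne' 1]
      rw [mul_zero, zero_add, mul_one]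
      rw [integral_inv_of_pos one_pos (by linarith)]
      rw [smul_eq_mul]
      rw [div_one, add_comm b 1]
      ring
    rw [hneg, hval]; ring
  rw [e₁, e₂] at hmono
  have heq : 2 * (Real.log (1 + b) / b) + b⁻¹ * π = (2 * Real.log (1 + b) + π) / b := by
    field_simp
  linarith [hmono, heq.le]

/-- kernel bound: `a t/(n²+a²t²) ≤ 2c/(1+c a t)` with `c = (2ν₀)⁻¹`. -/
lemma kernel_bound {ν₀ n a t : ℝ} (hν₀ : 0 < ν₀) (hn : ν₀ ≤ n) (ha : 0 < a) (ht : 0 ≤ t) :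
    a * t / (n ^ 2 + a ^ 2 * t ^ 2) ≤ 2 * (2 * ν₀)⁻¹ / (1 + (2 * ν₀)⁻¹ * (a * t)) := by
  set c : ℝ := (2 * ν₀)⁻¹ with hc
  have hcpos : 0 < c := by positivity
  have hcν : c * (2 * ν₀) = 1 := inv_mul_cancel₀ (by positivity)
  have hd1 : 0 < n ^ 2 + a ^ 2 * t ^ 2 := by nlinarith
  have hd2 : 0 < 1 + c * (a * t) := by positivity
  rw [div_le_div_iff₀ hd1 hd2]
  have key : 2 * ν₀ * (a * t) ≤ 2 * n ^ 2 + (a * t) ^ 2 := by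
    nlinarith [sq_nonneg (ν₀ - a * t), mul_nonneg ha.le ht]
  have key2 : c * (2 * ν₀ * (a * t)) ≤ c * (2 * n ^ 2 + (a * t) ^ 2) :=
    mul_le_mul_of_nonneg_left key hcpos.le
  nlinarith [key2, hcν]

/-- shifted Gaussian bound: `e^{-x²/2} ≤ 6/(1+(x+j)²)` for `j² = 1`. -/
lemma gauss_shift {x j : ℝ} (hj : j ^ 2 = 1) :
    Real.exp (-(2:ℝ)⁻¹ * x ^ 2) ≤ 6 * (1 + (x + j) ^ 2)⁻¹ := by
  have hpos : (0:ℝ) < 1 + (x + j) ^ 2 := by positivity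
  rw [← div_eq_mul_inv, le_div_iff₀ hpos]
  have he : (2:ℝ)⁻¹ * x ^ 2 + 1 ≤ Real.exp ((2:ℝ)⁻¹ * x ^ 2) := Real.add_one_le_exp _
  have hmul : Real.exp (-(2:ℝ)⁻¹ * x ^ 2) * Real.exp ((2:ℝ)⁻¹ * x ^ 2) = 1 := by
    rw [← Real.exp_add]; ring_nf; exact Real.exp_zero
  have hE : 0 < Real.exp (-(2:ℝ)⁻¹ * x ^ 2) := Real.exp_pos _
  have h2 : Real.exp (-(2:ℝ)⁻¹ * x ^ 2) * (1 + x ^ 2) ≤ 2 := by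
    nlinarith [mul_le_mul_of_nonneg_left he hE.le]
  have h1 : 1 + (x + j) ^ 2 ≤ 3 * (1 + x ^ 2) := by nlinarith [sq_nonneg (2 * x - j)]
  nlinarith [mul_le_mul_of_nonneg_left h1 hE.le]

/-- `y² e^{-y²/2} ≤ 2 e^{-y²/4}`. -/
lemma sq_gauss (y : ℝ) :
    y ^ 2 * Real.exp (-(2:ℝ)⁻¹ * y ^ 2) ≤ 2 * Real.exp (-(4:ℝ)⁻¹ * y ^ 2) := by
  have he : (8:ℝ)⁻¹ * y ^ 2 + 1 ≤ Real.exp ((8:ℝ)⁻¹ * y ^ 2) := Real.add_one_le_exp _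
  have hsq : Real.exp ((4:ℝ)⁻¹ * y ^ 2) = Real.exp ((8:ℝ)⁻¹ * y ^ 2) ^ 2 := by
    have h48 : (4:ℝ)⁻¹ * y ^ 2 = (8:ℝ)⁻¹ * y ^ 2 + (8:ℝ)⁻¹ * y ^ 2 := by ring
    rw [h48, Real.exp_add]; exact (sq _).symm
  have ht : y ^ 2 ≤ 2 * Real.exp ((4:ℝ)⁻¹ * y ^ 2) := by
    rw [hsq]
    nlinarith [he, sq_nonneg (y ^ 2 - 8), Real.exp_pos ((8:ℝ)⁻¹ * y ^ 2), sq_nonneg y]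
  have hinv : Real.exp (-(4:ℝ)⁻¹ * y ^ 2) * Real.exp ((4:ℝ)⁻¹ * y ^ 2) = 1 := by
    rw [← Real.exp_add]; ring_nf; exact Real.exp_zero
  have hE4 : 0 < Real.exp (-(4:ℝ)⁻¹ * y ^ 2) := Real.exp_pos _
  have h24 : y ^ 2 * Real.exp (-(4:ℝ)⁻¹ * y ^ 2) ≤ 2 := by
    nlinarith [mul_le_mul_of_nonneg_left ht hE4.le]
  have hsplit : Real.exp (-(2:ℝ)⁻¹ * y ^ 2)
      = Real.exp (-(4:ℝ)⁻¹ * y ^ 2) * Real.exp (-(4:ℝ)⁻¹ * y ^ 2) := by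
    rw [← Real.exp_add]; ring_nf
  rw [hsplit]
  nlinarith [h24, hE4.le]

/-- combined pointwise bound. -/
lemma pointwise_core {ν₀ n a x y z j : ℝ} (hν₀ : 0 < ν₀) (hn : ν₀ ≤ n) (ha : 0 < a)
    (hj : j ^ 2 = 1) :
    a * |x + j| / (n ^ 2 + a ^ 2 * (x + j) ^ 2)
        * (y ^ 2 * (Real.exp (-(2:ℝ)⁻¹ * x ^ 2)
            * (Real.exp (-(2:ℝ)⁻¹ * y ^ 2) * Real.exp (-(2:ℝ)⁻¹ * z ^ 2))))
      ≤ (12 * (2 * ν₀)⁻¹ * ((1 + (2 * ν₀)⁻¹ * a * |x + j|) * (1 + (x + j) ^ 2))⁻¹)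
          * ((2 * Real.exp (-(4:ℝ)⁻¹ * y ^ 2)) * Real.exp (-(2:ℝ)⁻¹ * z ^ 2)) := by
  set c : ℝ := (2 * ν₀)⁻¹ with hc
  have hcpos : 0 < c := by positivity
  have hden : 0 < n ^ 2 + a ^ 2 * (x + j) ^ 2 := by nlinarith [sq_nonneg (a * (x + j))]
  have h1 : a * |x + j| / (n ^ 2 + a ^ 2 * (x + j) ^ 2)
      ≤ 2 * c / (1 + c * (a * |x + j|)) := by
    have hkb := kernel_bound (t := |x + j|) hν₀ hn ha (abs_nonneg (x + j))
    calc a * |x + j| / (n ^ 2 + a ^ 2 * (x + j) ^ 2)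
        = a * |x + j| / (n ^ 2 + a ^ 2 * |x + j| ^ 2) := by rw [sq_abs]
      _ ≤ 2 * c / (1 + c * (a * |x + j|)) := hkb
  have h2 : Real.exp (-(2:ℝ)⁻¹ * x ^ 2) ≤ 6 * (1 + (x + j) ^ 2)⁻¹ := gauss_shift hj
  have h3 : y ^ 2 * Real.exp (-(2:ℝ)⁻¹ * y ^ 2) ≤ 2 * Real.exp (-(4:ℝ)⁻¹ * y ^ 2) :=
    sq_gauss y
  have hd2 : (0:ℝ) < 1 + c * (a * |x + j|) := by positivity
  have hd3 : (0:ℝ) < 1 + (x + j) ^ 2 := by positivity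
  calc a * |x + j| / (n ^ 2 + a ^ 2 * (x + j) ^ 2)
        * (y ^ 2 * (Real.exp (-(2:ℝ)⁻¹ * x ^ 2)
            * (Real.exp (-(2:ℝ)⁻¹ * y ^ 2) * Real.exp (-(2:ℝ)⁻¹ * z ^ 2))))
      = (a * |x + j| / (n ^ 2 + a ^ 2 * (x + j) ^ 2))
          * (Real.exp (-(2:ℝ)⁻¹ * x ^ 2)
            * ((y ^ 2 * Real.exp (-(2:ℝ)⁻¹ * y ^ 2)) * Real.exp (-(2:ℝ)⁻¹ * z ^ 2))) := by
        ring
    _ ≤ (2 * c / (1 + c * (a * |x + j|)))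
          * ((6 * (1 + (x + j) ^ 2)⁻¹)
            * ((2 * Real.exp (-(4:ℝ)⁻¹ * y ^ 2)) * Real.exp (-(2:ℝ)⁻¹ * z ^ 2))) := by
        have hnn1 : 0 ≤ a * |x + j| / (n ^ 2 + a ^ 2 * (x + j) ^ 2) := by positivity
        have hnn2 : 0 ≤ Real.exp (-(2:ℝ)⁻¹ * x ^ 2) := (Real.exp_pos _).le
        have hnn3 : 0 ≤ y ^ 2 * Real.exp (-(2:ℝ)⁻¹ * y ^ 2) := by positivity
        gcongr
    _ = (12 * c * ((1 + c * a * |x + j|) * (1 + (x + j) ^ 2))⁻¹)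
          * ((2 * Real.exp (-(4:ℝ)⁻¹ * y ^ 2)) * Real.exp (-(2:ℝ)⁻¹ * z ^ 2)) := by
        rw [mul_inv]
        field_simp
        ring

/-- Fubini on `EuclideanSpace ℝ (Fin 3)` for products of coordinate functions. -/
lemma euclid_prod_integral (G : Fin 3 → ℝ → ℝ) :
    ∫ v : EuclideanSpace ℝ (Fin 3), ∏ i, G i (v i) = ∏ i, ∫ x : ℝ, G i x := by
  have h1 : ∫ v : EuclideanSpace ℝ (Fin 3), ∏ i, G i (v i)
      = ∫ x : Fin 3 → ℝ, ∏ i, G i (x i) :=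
    (EuclideanSpace.volume_preserving_symm_measurableEquiv_toLp (Fin 3)).integral_comp
      (MeasurableEquiv.toLp 2 (Fin 3 → ℝ)).symm.measurableEmbedding
      (fun x : Fin 3 → ℝ => ∏ i, G i (x i))
  rw [h1]; exact MeasureTheory.integral_fintype_prod_eq_prod (μ := fun _ => volume) G

lemma euclid_prod_integrable (G : Fin 3 → ℝ → ℝ) (hG : ∀ i, Integrable (G i)) :
    Integrable (fun v : EuclideanSpace ℝ (Fin 3) => ∏ i, G i (v i)) :=
  ((EuclideanSpace.volume_preserving_symm_measurableEquiv_toLp (Fin 3)).integrable_comp_emb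
      (MeasurableEquiv.toLp 2 (Fin 3 → ℝ)).symm.measurableEmbedding).2
    (Integrable.fintype_prod_dep hG)

set_option maxHeartbeats 1000000 in
theorem stmt10 (ν₀ ν₁ : ℝ) (hν₀ : 0 < ν₀) (hν₁ : 0 < ν₁) :
    ∃ C₃ > (0:ℝ),
      ∀ ν : EuclideanSpace ℝ (Fin 3) → ℝ, Measurable ν →
        (∀ v, ν₀ * (1 + ‖v‖) ≤ ν v ∧ ν v ≤ ν₁ * (1 + ‖v‖)) →
        ∀ j : ℝ, (j = -1 ∨ j = 1) →
        ∀ ε ∈ Set.Ioo (0:ℝ) 1, ∀ s : ℝ, 0 < s → 2 ≤ ε * s →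
          |Squant ν ε s j| ≤ C₃ * Real.log (ε * s) / s := by
  set c : ℝ := (2 * ν₀)⁻¹ with hc
  have hcpos : 0 < c := by positivity
  have hlogc : 0 ≤ Real.log (1 + c) := Real.log_nonneg (by linarith)
  refine ⟨144 * (2 + 4 * Real.log (1 + c) + 2 * π), by nlinarith [Real.pi_pos], ?_⟩
  intro ν hνmeas hνbd j hj ε hε s hs has
  have hεpos : 0 < ε := hε.1
  have ha : 0 < ε * s := by positivity
  have hj2 : j ^ 2 = 1 := by rcases hj with h | h <;> rw [h] <;> norm_num
  -- the three coordinate majorants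
  set G0 : ℝ → ℝ := fun x =>
    12 * c * ((1 + c * (ε * s) * |x + j|) * (1 + (x + j) ^ 2))⁻¹ with hG0
  set G1 : ℝ → ℝ := fun y => 2 * Real.exp (-(4:ℝ)⁻¹ * y ^ 2) with hG1
  set G2 : ℝ → ℝ := fun z => Real.exp (-(2:ℝ)⁻¹ * z ^ 2) with hG2
  have hbpos : 0 < c * (ε * s) := by positivity
  have hG0int : Integrable G0 := by
    have base := oneDim_integrable hbpos
    have shift : Integrable (fun x : ℝ => ((1 + c * (ε * s) * |x + j|) * (1 + (x + j) ^ 2))⁻¹) := by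
      have := base.comp_add_right j
      simpa [mul_assoc] using this
    simpa [hG0] using shift.const_mul (12 * c)
  have hG1int : Integrable G1 :=
    (integrable_exp_neg_mul_sq (by norm_num : (0:ℝ) < 4⁻¹)).const_mul 2
  have hG2int : Integrable G2 := integrable_exp_neg_mul_sq (by norm_num : (0:ℝ) < 2⁻¹)
  set P : ℝ := (2 * π) ^ (-(3:ℝ)/2) with hP
  have hPpos : 0 < P := by
    rw [hP]; exact Real.rpow_pos_of_pos (by positivity) _
  have hPle : P ≤ 1 := by
    rw [hP]
    exact Real.rpow_le_one_of_one_le_of_nonpos (by nlinarith [Real.pi_gt_three]) (by norm_num)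
  set g : EuclideanSpace ℝ (Fin 3) → ℝ := fun v => P * (G0 (v 0) * (G1 (v 1) * G2 (v 2)))
    with hgdef
  have hprodform : ∀ v : EuclideanSpace ℝ (Fin 3),
      G0 (v 0) * (G1 (v 1) * G2 (v 2)) = ∏ i, (![G0, G1, G2]) i (v i) := by
    intro v
    rw [Fin.prod_univ_three]
    simp [mul_assoc]
  have hMatInt : ∀ i, Integrable ((![G0, G1, G2]) i) := by
    intro i
    fin_cases i <;> simp [hG0int, hG1int, hG2int]
  have hgint : Integrable g := by
    have h0 : Integrable (fun v : EuclideanSpace ℝ (Fin 3) => ∏ i, (![G0, G1, G2]) i (v i)) :=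
      euclid_prod_integrable _ hMatInt
    have h1 : Integrable (fun v : EuclideanSpace ℝ (Fin 3) =>
        G0 (v 0) * (G1 (v 1) * G2 (v 2))) := by
      apply h0.congr
      exact Filter.Eventually.of_forall fun v => (hprodform v).symm
    simpa [hgdef] using h1.const_mul P
  -- the pointwise bound
  have hpt : ∀ v : EuclideanSpace ℝ (Fin 3),
      ‖(ε * s * (v 0 + j) * (v 1) ^ 2 * Mx v) / ((ν v) ^ 2 + ε ^ 2 * s ^ 2 * (v 0 + j) ^ 2)‖
        ≤ g v := by
    intro v
    have hn : ν₀ ≤ ν v := le_trans (by nlinarith [norm_nonneg v]) (hνbd v).1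
    have hden : 0 < (ν v) ^ 2 + ε ^ 2 * s ^ 2 * (v 0 + j) ^ 2 := by
      nlinarith [sq_nonneg (ε * s * (v 0 + j))]
    have hMxpos : 0 < Mx v := by rw [Mx]; positivity
    have hnormsq : ‖v‖ ^ 2 = (v 0) ^ 2 + (v 1) ^ 2 + (v 2) ^ 2 := by
      have h0 : ‖v‖ ^ 2 = ∑ i, ‖v i‖ ^ 2 := by
        rw [EuclideanSpace.norm_eq, Real.sq_sqrt (by positivity)]
      rw [h0, Fin.sum_univ_three]
      simp [Real.norm_eq_abs, sq_abs]
    have hMx : Mx v = P * (Real.exp (-(2:ℝ)⁻¹ * (v 0) ^ 2)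
        * (Real.exp (-(2:ℝ)⁻¹ * (v 1) ^ 2) * Real.exp (-(2:ℝ)⁻¹ * (v 2) ^ 2))) := by
      rw [Mx, hnormsq, ← Real.exp_add, ← Real.exp_add]
      rw [hP]
      congr 1
      ring
    have hnum : |ε * s * (v 0 + j) * (v 1) ^ 2 * Mx v|
        = ε * s * |v 0 + j| * ((v 1) ^ 2 * Mx v) := by
      rw [abs_mul, abs_mul, abs_mul, abs_of_pos ha, abs_of_nonneg (sq_nonneg (v 1)),
        abs_of_pos hMxpos]
      ring
    have hee : ε ^ 2 * s ^ 2 = (ε * s) ^ 2 := by ring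
    have core := pointwise_core (n := ν v) (a := ε * s) (x := v 0) (y := v 1) (z := v 2)
      hν₀ hn ha hj2
    calc ‖(ε * s * (v 0 + j) * (v 1) ^ 2 * Mx v)
          / ((ν v) ^ 2 + ε ^ 2 * s ^ 2 * (v 0 + j) ^ 2)‖
        = |ε * s * (v 0 + j) * (v 1) ^ 2 * Mx v|
          / ((ν v) ^ 2 + ε ^ 2 * s ^ 2 * (v 0 + j) ^ 2) := by
          rw [Real.norm_eq_abs, abs_div, abs_of_pos hden]
      _ = P * (ε * s * |v 0 + j| / ((ν v) ^ 2 + (ε * s) ^ 2 * (v 0 + j) ^ 2)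
            * ((v 1) ^ 2 * (Real.exp (-(2:ℝ)⁻¹ * (v 0) ^ 2)
              * (Real.exp (-(2:ℝ)⁻¹ * (v 1) ^ 2) * Real.exp (-(2:ℝ)⁻¹ * (v 2) ^ 2))))) := by
          rw [hnum, hMx, hee, div_eq_mul_inv, div_eq_mul_inv]
          ring
      _ ≤ P * ((12 * (2 * ν₀)⁻¹
            * ((1 + (2 * ν₀)⁻¹ * (ε * s) * |v 0 + j|) * (1 + (v 0 + j) ^ 2))⁻¹)
            * ((2 * Real.exp (-(4:ℝ)⁻¹ * (v 1) ^ 2))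
              * Real.exp (-(2:ℝ)⁻¹ * (v 2) ^ 2))) :=
          mul_le_mul_of_nonneg_left core hPpos.le
      _ = g v := by
          rw [hgdef]
  -- bound the integral of `g`
  have hI0nonneg : 0 ≤ ∫ x : ℝ, G0 x :=
    integral_nonneg fun x => by rw [hG0]; positivity
  have hI1nonneg : 0 ≤ ∫ x : ℝ, G1 x :=
    integral_nonneg fun x => by rw [hG1]; positivity
  have hI0 : ∫ x : ℝ, G0 x ≤ 12 * (2 * Real.log (1 + c * (ε * s)) + π) / (ε * s) := by
    have hsplit : ∫ x : ℝ, G0 x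
        = 12 * c * ∫ x : ℝ, ((1 + c * (ε * s) * |x + j|) * (1 + (x + j) ^ 2))⁻¹ := by
      rw [hG0, MeasureTheory.integral_const_mul]
    have hshift : ∫ x : ℝ, ((1 + c * (ε * s) * |x + j|) * (1 + (x + j) ^ 2))⁻¹
        = ∫ x : ℝ, ((1 + c * (ε * s) * |x|) * (1 + x ^ 2))⁻¹ :=
      integral_add_right_eq_self (fun x : ℝ => ((1 + c * (ε * s) * |x|) * (1 + x ^ 2))⁻¹) j
    have hbnd := oneDim_bound hbpos
    rw [hsplit, hshift]
    have h12 : 12 * c * ∫ x : ℝ, ((1 + c * (ε * s) * |x|) * (1 + x ^ 2))⁻¹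
        ≤ 12 * c * ((2 * Real.log (1 + c * (ε * s)) + π) / (c * (ε * s))) :=
      mul_le_mul_of_nonneg_left hbnd (by positivity)
    have heq : 12 * c * ((2 * Real.log (1 + c * (ε * s)) + π) / (c * (ε * s)))
        = 12 * (2 * Real.log (1 + c * (ε * s)) + π) / (ε * s) := by
      field_simp
    linarith [h12, heq.le]
  have hI1 : ∫ x : ℝ, G1 x ≤ 8 := by
    have : ∫ x : ℝ, G1 x = 2 * Real.sqrt (π / 4⁻¹) := by
      rw [hG1, MeasureTheory.integral_const_mul, integral_gaussian]
    rw [this]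
    have h16 : π / 4⁻¹ ≤ 16 := by
      rw [div_eq_mul_inv, inv_inv]; nlinarith [Real.pi_le_four]
    have : Real.sqrt (π / 4⁻¹) ≤ 4 := by
      calc Real.sqrt (π / 4⁻¹) ≤ Real.sqrt 16 := Real.sqrt_le_sqrt h16
        _ = 4 := by
          rw [show (16:ℝ) = 4 ^ 2 by norm_num, Real.sqrt_sq (by norm_num : (0:ℝ) ≤ 4)]
    linarith
  have hI2 : ∫ x : ℝ, G2 x ≤ 3 := by
    have : ∫ x : ℝ, G2 x = Real.sqrt (π / 2⁻¹) := by
      rw [hG2, integral_gaussian]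
    rw [this]
    have h9 : π / 2⁻¹ ≤ 9 := by
      rw [div_eq_mul_inv, inv_inv]; nlinarith [Real.pi_le_four]
    calc Real.sqrt (π / 2⁻¹) ≤ Real.sqrt 9 := Real.sqrt_le_sqrt h9
      _ = 3 := by
        rw [show (9:ℝ) = 3 ^ 2 by norm_num, Real.sqrt_sq (by norm_num : (0:ℝ) ≤ 3)]
  have hgval : ∫ v, g v = P * ((∫ x : ℝ, G0 x) * ((∫ x : ℝ, G1 x) * (∫ x : ℝ, G2 x))) := by
    rw [hgdef]
    rw [MeasureTheory.integral_const_mul]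
    congr 1
    have hcongr : ∫ v : EuclideanSpace ℝ (Fin 3), G0 (v 0) * (G1 (v 1) * G2 (v 2))
        = ∫ v : EuclideanSpace ℝ (Fin 3), ∏ i, (![G0, G1, G2]) i (v i) :=
      integral_congr_ae (Filter.Eventually.of_forall fun v => hprodform v)
    rw [hcongr, euclid_prod_integral, Fin.prod_univ_three]
    simp [mul_assoc]
  set L : ℝ := Real.log (1 + c * (ε * s)) with hL
  have hLnonneg : 0 ≤ L := Real.log_nonneg (by nlinarith)
  have hgle : ∫ v, g v ≤ 288 * (2 * L + π) / (ε * s) := by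
    rw [hgval]
    have h1 : (∫ x : ℝ, G1 x) * (∫ x : ℝ, G2 x) ≤ 24 := by
      have hI2nonneg : 0 ≤ ∫ x : ℝ, G2 x :=
        integral_nonneg fun x => by rw [hG2]; positivity
      nlinarith
    have h2 : (∫ x : ℝ, G0 x) * ((∫ x : ℝ, G1 x) * (∫ x : ℝ, G2 x))
        ≤ (12 * (2 * L + π) / (ε * s)) * 24 := by
      apply mul_le_mul hI0 h1 (by positivity) ?_
      have : 0 ≤ 2 * L + π := by nlinarith [Real.pi_pos]
      positivity
    have h3 : P * ((∫ x : ℝ, G0 x) * ((∫ x : ℝ, G1 x) * (∫ x : ℝ, G2 x)))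
        ≤ 1 * ((12 * (2 * L + π) / (ε * s)) * 24) := by
      apply mul_le_mul hPle h2 ?_ (by norm_num)
      have hI12 : 0 ≤ (∫ x : ℝ, G1 x) * (∫ x : ℝ, G2 x) :=
        mul_nonneg hI1nonneg (integral_nonneg fun x => by rw [hG2]; positivity)
      exact mul_nonneg hI0nonneg hI12
    calc P * ((∫ x : ℝ, G0 x) * ((∫ x : ℝ, G1 x) * (∫ x : ℝ, G2 x)))
        ≤ 1 * ((12 * (2 * L + π) / (ε * s)) * 24) := h3
      _ = 288 * (2 * L + π) / (ε * s) := by ring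
  -- assemble
  have habs : |Squant ν ε s j| ≤ (ε / 2) * (288 * (2 * L + π) / (ε * s)) := by
    rw [Squant, abs_mul, abs_of_pos (by positivity : (0:ℝ) < ε / 2)]
    apply mul_le_mul_of_nonneg_left ?_ (by positivity : (0:ℝ) ≤ ε / 2)
    rw [← Real.norm_eq_abs]
    calc ‖∫ v : EuclideanSpace ℝ (Fin 3),
          (ε * s * (v 0 + j) * (v 1) ^ 2 * Mx v)
            / ((ν v) ^ 2 + ε ^ 2 * s ^ 2 * (v 0 + j) ^ 2)‖
        ≤ ∫ v, g v := norm_integral_le_of_norm_le hgint (Filter.Eventually.of_forall hpt)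
      _ ≤ 288 * (2 * L + π) / (ε * s) := hgle
  have hfinal1 : (ε / 2) * (288 * (2 * L + π) / (ε * s)) = 144 * (2 * L + π) / s := by
    field_simp
    ring
  -- compare with C₃ log(εs)/s
  have hla : (1:ℝ)/2 ≤ Real.log (ε * s) := by
    have h2a : Real.log 2 ≤ Real.log (ε * s) :=
      Real.log_le_log (by norm_num) has
    nlinarith [Real.log_two_gt_d9]
  have hLle : L ≤ Real.log (1 + c) + Real.log (ε * s) := by
    have harg : 1 + c * (ε * s) ≤ (1 + c) * (ε * s) := by nlinarith
    have hpos1 : (0:ℝ) < 1 + c * (ε * s) := by positivity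
    calc L ≤ Real.log ((1 + c) * (ε * s)) := Real.log_le_log hpos1 harg
      _ = Real.log (1 + c) + Real.log (ε * s) :=
        Real.log_mul (by positivity) (by positivity)
  have hnum : 144 * (2 * L + π) ≤ 144 * (2 + 4 * Real.log (1 + c) + 2 * π) * Real.log (ε * s) := by
    nlinarith [hla, hlogc, Real.pi_pos, hLle]
  have hfin : 144 * (2 * L + π) / s
      ≤ 144 * (2 + 4 * Real.log (1 + c) + 2 * π) * Real.log (ε * s) / s :=
    (div_le_div_iff_of_pos_right hs).mpr hnum
  calc |Squant ν ε s j| ≤ (ε / 2) * (288 * (2 * L + π) / (ε * s)) := habs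
    _ = 144 * (2 * L + π) / s := hfinal1
    _ ≤ 144 * (2 + 4 * Real.log (1 + c) + 2 * π) * Real.log (ε * s) / s := hfin

end
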